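/- Let Q₀, Q₁, σ be real numbers with σ > 0, and let X₀ and X₁ be independent real-valued random variables with X_i distributed as the Gaussian measure with mean Q_i and variance σ². Define M₁ = E[exp(X₁)] / (E[exp(X₁)] + E[exp(X₀)]) and M₂ = E[exp(2X₁)] / (E[exp(2X₁)] + E[exp(2X₀)] + 2·E[exp(X₀)]·E[exp(X₁)]). Then M₂ − M₁² = 2·exp(3Q₁ + Q₀)·(exp(σ²) − 1) / ((exp(2Q₁ + σ²) + exp(2Q₀ + σ²) + 2·exp(Q₀ + Q₁)) · (exp(Q₁) + exp(Q₀))²). -/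

import Mathlib

open MeasureTheory ProbabilityTheory Real
open scoped NNReal ENNReal

lemma exp_mul_gaussianPDFReal (t μ : ℝ) {v : ℝ≥0} (hv : (v:ℝ) ≠ 0) (x : ℝ) :
    rexp (t * x) * gaussianPDFReal μ v x
      = rexp (t * μ + t ^ 2 * v / 2) * gaussianPDFReal (μ + t * v) v x := by
  simp only [gaussianPDFReal]
  rw [mul_comm (rexp (t*x)), mul_assoc, ← exp_add, mul_left_comm, mul_assoc, ← exp_add]
  congr 2
  field_simp
  ring

lemma integral_exp_gaussianReal (t μ : ℝ) {σ : ℝ} (hσ : 0 < σ) :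
    ∫ x, rexp (t * x) ∂(gaussianReal μ ⟨σ ^ 2, sq_nonneg σ⟩)
      = rexp (t * μ + t ^ 2 * σ ^ 2 / 2) := by
  have hv : (⟨σ ^ 2, sq_nonneg σ⟩ : NNReal) ≠ 0 := by
    simp [← NNReal.coe_ne_zero, (pow_pos hσ 2).ne']
  rw [gaussianReal_of_var_ne_zero _ hv]
  have hdens : (gaussianPDF μ ⟨σ ^ 2, sq_nonneg σ⟩)
      = fun x => ((gaussianPDFReal μ ⟨σ ^ 2, sq_nonneg σ⟩ x).toNNReal : ENNReal) := by
    funext x; simp [gaussianPDF, ENNReal.ofReal]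
  rw [hdens]
  erw [integral_withDensity_eq_integral_smul
    ((measurable_gaussianPDFReal μ (⟨σ ^ 2, sq_nonneg σ⟩ : ℝ≥0)).real_toNNReal)]
  have : ∀ x, (Real.toNNReal (gaussianPDFReal μ ⟨σ ^ 2, sq_nonneg σ⟩ x)) • rexp (t * x)
      = rexp (t * μ + t ^ 2 * σ ^ 2 / 2) * gaussianPDFReal (μ + t * σ ^ 2) ⟨σ ^ 2, sq_nonneg σ⟩ x := by
    intro x
    erw [NNReal.smul_def, smul_eq_mul, Real.coe_toNNReal _ (gaussianPDFReal_nonneg μ (⟨σ ^ 2, sq_nonneg σ⟩ : ℝ≥0) x),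
      mul_comm]
    exact exp_mul_gaussianPDFReal t μ (by exact (pow_pos hσ 2).ne') x
  simp_rw [this]
  rw [integral_const_mul, integral_gaussianPDFReal_eq_one _ hv, mul_one]

lemma integral_exp_of_map {Ω : Type*} [MeasureSpace Ω]
    (t μ : ℝ) {σ : ℝ} (hσ : 0 < σ) {X : Ω → ℝ}
    (hX : Measure.map X ℙ = gaussianReal μ ⟨σ ^ 2, sq_nonneg σ⟩) :
    ∫ ω, rexp (t * X ω) ∂ℙ = rexp (t * μ + t ^ 2 * σ ^ 2 / 2) := by
  have hXm : AEMeasurable X ℙ := aemeasurable_of_map_neZero (by rw [hX]; exact ⟨@IsProbabilityMeasure.ne_zero _ _ _ (instIsProbabilityMeasureGaussianReal _ _)⟩)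
  calc ∫ ω, rexp (t * X ω) ∂ℙ = ∫ x, rexp (t * x) ∂(Measure.map X ℙ) := by
        rw [integral_map hXm (Continuous.aestronglyMeasurable (by continuity))]
    _ = _ := by rw [hX]; exact integral_exp_gaussianReal t μ hσ


/-- Variance expression in the proof of Proposition 2: with `X₀, X₁` independent
Gaussians with means `Q₀, Q₁` and common variance `σ²`, the moments
`M₁ = E[exp X₁]/(E[exp X₁]+E[exp X₀])` and
`M₂ = E[exp 2X₁]/(E[exp 2X₁]+E[exp 2X₀]+2 E[exp X₀] E[exp X₁])` satisfy
`M₂ − M₁² = 2 exp(3Q₁+Q₀)(exp(σ²)−1) /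
  ((exp(2Q₁+σ²)+exp(2Q₀+σ²)+2 exp(Q₀+Q₁))(exp Q₁+exp Q₀)²)`. -/
theorem stmt_10 {Ω : Type*} [MeasureSpace Ω] [IsProbabilityMeasure (ℙ : Measure Ω)]
    (Q₀ Q₁ σ : ℝ) (hσ : 0 < σ) (X₀ X₁ : Ω → ℝ)
    (hindep : IndepFun X₀ X₁ ℙ)
    (h₀ : Measure.map X₀ ℙ = gaussianReal Q₀ ⟨σ ^ 2, sq_nonneg σ⟩)
    (h₁ : Measure.map X₁ ℙ = gaussianReal Q₁ ⟨σ ^ 2, sq_nonneg σ⟩)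
    (M₁ M₂ : ℝ)
    (hM₁ : M₁ = (∫ ω, exp (X₁ ω) ∂ℙ) / ((∫ ω, exp (X₁ ω) ∂ℙ) + (∫ ω, exp (X₀ ω) ∂ℙ)))
    (hM₂ : M₂ = (∫ ω, exp (2 * X₁ ω) ∂ℙ) /
        ((∫ ω, exp (2 * X₁ ω) ∂ℙ) + (∫ ω, exp (2 * X₀ ω) ∂ℙ) +
          2 * (∫ ω, exp (X₀ ω) ∂ℙ) * (∫ ω, exp (X₁ ω) ∂ℙ))) :
    M₂ - M₁ ^ 2
      = 2 * exp (3 * Q₁ + Q₀) * (exp (σ ^ 2) - 1) /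
        ((exp (2 * Q₁ + σ ^ 2) + exp (2 * Q₀ + σ ^ 2) + 2 * exp (Q₀ + Q₁)) *
          (exp Q₁ + exp Q₀) ^ 2) := by
  set A := exp Q₁ with hA
  set B := exp Q₀ with hB
  set S := exp (σ ^ 2 / 2) with hS
  have i10 : ∫ ω, exp (X₀ ω) ∂ℙ = B * S := by
    have h := integral_exp_of_map 1 Q₀ hσ h₀
    simp only [one_mul, one_pow] at h
    rw [h, hB, hS, ← exp_add]
  have i11 : ∫ ω, exp (X₁ ω) ∂ℙ = A * S := by
    have h := integral_exp_of_map 1 Q₁ hσ h₁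
    simp only [one_mul, one_pow] at h
    rw [h, hA, hS, ← exp_add]
  have i20 : ∫ ω, exp (2 * X₀ ω) ∂ℙ = B ^ 2 * S ^ 4 := by
    have h := integral_exp_of_map 2 Q₀ hσ h₀
    rw [h, hB, hS, ← exp_nat_mul, ← exp_nat_mul, ← exp_add]
    norm_num; ring_nf
  have i21 : ∫ ω, exp (2 * X₁ ω) ∂ℙ = A ^ 2 * S ^ 4 := by
    have h := integral_exp_of_map 2 Q₁ hσ h₁
    rw [h, hA, hS, ← exp_nat_mul, ← exp_nat_mul, ← exp_add]
    norm_num; ring_nf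
  have g1 : exp (3 * Q₁ + Q₀) = A ^ 3 * B := by
    rw [hA, hB, ← exp_nat_mul, ← exp_add]; norm_num
  have g2 : exp (σ ^ 2) = S ^ 2 := by rw [hS, ← exp_nat_mul]; congr 1; push_cast; ring
  have g3 : exp (2 * Q₁ + σ ^ 2) = A ^ 2 * S ^ 2 := by
    rw [hA, hS, ← exp_nat_mul, ← exp_nat_mul, ← exp_add]; norm_num; ring_nf
  have g4 : exp (2 * Q₀ + σ ^ 2) = B ^ 2 * S ^ 2 := by
    rw [hB, hS, ← exp_nat_mul, ← exp_nat_mul, ← exp_add]; norm_num; ring_nf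
  have g5 : exp (Q₀ + Q₁) = B * A := by rw [hA, hB, ← exp_add]
  have hApos : 0 < A := exp_pos _
  have hBpos : 0 < B := exp_pos _
  have hSpos : 0 < S := exp_pos _
  rw [hM₁, hM₂, i10, i11, i20, i21, g1, g2, g3, g4, g5]
  have d1 : A ^ 2 * S ^ 4 + B ^ 2 * S ^ 4 + 2 * (B * S) * (A * S) ≠ 0 := by positivity
  have d2 : A * S + B * S ≠ 0 := by positivity
  have d3 : (A ^ 2 * S ^ 2 + B ^ 2 * S ^ 2 + 2 * (B * A)) * (A + B) ^ 2 ≠ 0 := by positivity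
  field_simp
  ring
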